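/- Let m ≥ 2 and let x < m be a positive integer relatively prime to m, with Hirzebruch–Jung continued fraction expansion m/x = n_1 − 1/(n_2 − 1/(⋯ − 1/n_l)), all n_j ≥ 2. Let y < m be the unique positive integer with x·y ≡ 1 (mod m). Then the reversed sequence gives the Hirzebruch–Jung continued fraction expansion of m/y, that is, m/y = n_l − 1/(n_{l−1} − 1/(⋯ − 1/n_1)). -/

import Mathlib

/-- value of the Hirzebruch–Jung continued fraction `n₁ - 1/(n₂ - 1/(⋯ - 1/n_l))`
(the empty continued fraction has value `0`, and `1/0 = 0` in `ℚ` makes the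
singleton case evaluate to `n₁`). -/
def hjEval : List ℤ → ℚ
  | [] => 0
  | n :: ns => (n : ℚ) - 1 / hjEval ns

def hjAC : List ℤ → ℤ × ℤ
  | [] => (1, 0)
  | n :: ns => (n * (hjAC ns).1 - (hjAC ns).2, (hjAC ns).1)

def hjBD : List ℤ → ℤ × ℤ
  | [] => (0, 1)
  | n :: ns => (n * (hjBD ns).1 - (hjBD ns).2, (hjBD ns).1)

lemma hjAC_cons (n : ℤ) (ns : List ℤ) :
    hjAC (n :: ns) = (n * (hjAC ns).1 - (hjAC ns).2, (hjAC ns).1) := rfl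

lemma hjBD_cons (n : ℤ) (ns : List ℤ) :
    hjBD (n :: ns) = (n * (hjBD ns).1 - (hjBD ns).2, (hjBD ns).1) := rfl

lemma hj_det (ns : List ℤ) :
    (hjAC ns).1 * (hjBD ns).2 - (hjBD ns).1 * (hjAC ns).2 = 1 := by
  induction ns with
  | nil => simp [hjAC, hjBD]
  | cons n ns ih =>
    rw [hjAC_cons, hjBD_cons]
    dsimp only
    linear_combination ih

lemma hj_append (ns : List ℤ) (n : ℤ) :
    hjAC (ns ++ [n]) = (n * (hjAC ns).1 + (hjBD ns).1, n * (hjAC ns).2 + (hjBD ns).2) ∧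
    hjBD (ns ++ [n]) = (-(hjAC ns).1, -(hjAC ns).2) := by
  induction ns with
  | nil => simp [hjAC, hjBD]
  | cons m ms ih =>
    simp only [List.cons_append]
    rw [hjAC_cons m (ms ++ [n]), hjBD_cons m (ms ++ [n]), ih.1, ih.2,
      hjAC_cons m ms, hjBD_cons m ms]
    dsimp only
    constructor <;> · rw [Prod.ext_iff]; constructor <;> · dsimp only; try ring

lemma hj_rev (ns : List ℤ) :
    hjAC ns.reverse = ((hjAC ns).1, -(hjBD ns).1) ∧
    hjBD ns.reverse = (-(hjAC ns).2, (hjBD ns).2) := by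
  induction ns with
  | nil => simp [hjAC, hjBD]
  | cons n ns ih =>
    rw [List.reverse_cons]
    have h := hj_append ns.reverse n
    rw [ih.1, ih.2] at h
    rw [h.1, h.2, hjAC_cons, hjBD_cons]
    dsimp only
    constructor <;> · rw [Prod.ext_iff]; constructor <;> · dsimp only; try ring

lemma hj_inv (ns : List ℤ) (hne : ns ≠ []) (hns : ∀ n ∈ ns, 2 ≤ n) :
    1 ≤ (hjAC ns).2 ∧ (hjAC ns).2 < (hjAC ns).1 ∧
    (hjBD ns).2 ≤ 0 ∧ (hjBD ns).1 < (hjBD ns).2 ∧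
    (hjAC ns).2 + (hjBD ns).2 ≤ (hjAC ns).1 + (hjBD ns).1 ∧
    1 ≤ (hjAC ns).2 + (hjBD ns).2 := by
  induction ns with
  | nil => exact absurd rfl hne
  | cons n ns ih =>
    have hn : 2 ≤ n := hns n List.mem_cons_self
    cases ns with
    | nil =>
      simp only [hjAC, hjBD]
      norm_num
      omega
    | cons m ms =>
      obtain ⟨h1, h2, h3, h4, h5, h6⟩ :=
        ih (List.cons_ne_nil _ _) (fun k hk => hns k (List.mem_cons_of_mem _ hk))
      set a := (hjAC (m :: ms)).1 with ha
      set c := (hjAC (m :: ms)).2 with hc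
      set b := (hjBD (m :: ms)).1 with hb
      set d := (hjBD (m :: ms)).2 with hd
      rw [show hjAC (n :: m :: ms) = (n * a - c, a) from rfl,
        show hjBD (n :: m :: ms) = (n * b - d, b) from rfl]
      dsimp only
      refine ⟨by omega, by nlinarith, by omega, by nlinarith, by nlinarith, by omega⟩

lemma hj_eval_eq (ns : List ℤ) (hns : ∀ n ∈ ns, 2 ≤ n) :
    hjEval ns = ((hjAC ns).1 : ℚ) / ((hjAC ns).2 : ℚ) := by
  induction ns with
  | nil => simp [hjEval, hjAC]
  | cons n ns ih =>
    rcases eq_or_ne ns [] with rfl | hne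
    · simp [hjEval, hjAC]
    · obtain ⟨h1, h2, _⟩ := hj_inv ns hne (fun k hk => hns k (List.mem_cons_of_mem _ hk))
      have ha : (0:ℚ) < ((hjAC ns).1 : ℚ) := by exact_mod_cast by omega
      have hc : (0:ℚ) < ((hjAC ns).2 : ℚ) := by exact_mod_cast by omega
      rw [hjEval, ih (fun k hk => hns k (List.mem_cons_of_mem _ hk)), hjAC_cons]
      dsimp only
      push_cast
      field_simp
      try ring


/-- Proposition 3.2: if `m/x = n₁ - 1/(n₂ - 1/(⋯ - 1/n_l))` is the Hirzebruch–Jung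
continued fraction expansion and `y < m` is the unique positive integer with
`x y ≡ 1 (mod m)`, then `m/y = n_l - 1/(n_{l-1} - 1/(⋯ - 1/n₁))`. -/
theorem hj_reverse (m x y : ℤ) (hm : 2 ≤ m)
    (hx0 : 0 < x) (hxm : x < m) (hcop : Int.gcd x m = 1)
    (hy0 : 0 < y) (hym : y < m) (hxy : m ∣ x * y - 1)
    (ns : List ℤ) (hns : ∀ n ∈ ns, 2 ≤ n) (hhj : hjEval ns = (m : ℚ) / (x : ℚ)) :
    hjEval ns.reverse = (m : ℚ) / (y : ℚ) := by
  -- ns is nonempty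
  have hne : ns ≠ [] := by
    rintro rfl
    have h0 : (m : ℚ) / (x : ℚ) = 0 := by rw [← hhj]; rfl
    rw [div_eq_zero_iff] at h0
    rcases h0 with h | h <;>
      · have : ((0:ℤ) : ℚ) = 0 := by norm_num
        rw [← this] at h
        have := Rat.intCast_injective h
        omega
  obtain ⟨h1, h2, h3, h4, h5, h6⟩ := hj_inv ns hne hns
  have hdet := hj_det ns
  set a := (hjAC ns).1 with haA
  set c := (hjAC ns).2 with hcA
  set b := (hjBD ns).1 with hbA
  set d := (hjBD ns).2 with hdA
  -- from the eval formula, a/c = m/x, both in lowest terms with positive entries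
  have heval := hj_eval_eq ns hns
  rw [hhj] at heval
  have hc0 : (0:ℚ) < (c : ℚ) := by exact_mod_cast by omega
  have hx0' : (0:ℚ) < (x : ℚ) := by exact_mod_cast hx0
  have hcross : m * c = a * x := by
    have h := heval
    rw [div_eq_div_iff (ne_of_gt hx0') (ne_of_gt hc0)] at h
    exact_mod_cast h
  have hac : IsCoprime c a := ⟨-b, d, by linear_combination hdet⟩
  have hxm' : IsCoprime x m := Int.isCoprime_iff_gcd_eq_one.mpr hcop
  have hcx : c = x := by
    have hdvd1 : c ∣ x := hac.dvd_of_dvd_mul_left ⟨m, by linarith [hcross]⟩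
    have hdvd2 : x ∣ c := hxm'.dvd_of_dvd_mul_right ⟨a, by linarith [hcross]⟩
    exact Int.dvd_antisymm (by omega) (by omega) hdvd1 hdvd2
  have ham : a = m := by
    have h : a * x = m * x := by rw [← hcross, hcx]
    have hx : x ≠ 0 := by omega
    exact mul_right_cancel₀ hx h
  -- y = -b
  have hmod : m ∣ x * (-b) - 1 := ⟨-d, by linear_combination hdet + b * hcx - d * ham⟩
  have hyb : y = -b := by
    have hdvd : m ∣ x * (y - (-b)) := by
      have h : x * (y - (-b)) = (x * y - 1) - (x * (-b) - 1) := by ring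
      rw [h]
      exact dvd_sub hxy hmod
    have hdvd' : m ∣ y - (-b) := hxm'.symm.dvd_of_dvd_mul_left hdvd
    have hz : y - (-b) = 0 := Int.eq_zero_of_abs_lt_dvd hdvd' (by
      rw [abs_lt]
      constructor <;> omega)
    omega
  -- evaluate the reverse
  have hns' : ∀ n ∈ ns.reverse, 2 ≤ n := fun n hn => hns n (List.mem_reverse.mp hn)
  rw [hj_eval_eq ns.reverse hns', (hj_rev ns).1]
  dsimp only
  rw [← haA, ← hbA, ham, hyb]
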